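/- Let S be a numerical semigroup and f an automorphism of P(S). If X ∈ P(S) has exactly two elements, then f(X) = X. -/

import Mathlib

open Pointwise

/-- The power semigroup `P(S)`: finite nonempty subsets of `S`. -/
def PS (S : Set ℕ) : Set (Finset ℕ) := {X | X.Nonempty ∧ (X : Set ℕ) ⊆ S}

/-- `f` is an automorphism of the power semigroup `P(S)`:
an additive bijection of `P(S)` (setwise addition). -/
def IsPowerAut (S : Set ℕ) (f : Finset ℕ → Finset ℕ) : Prop :=
  (∀ X ∈ PS S, f X ∈ PS S) ∧
  (∀ X ∈ PS S, ∀ Y ∈ PS S, f X = f Y → X = Y) ∧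
  (∀ Y ∈ PS S, ∃ X ∈ PS S, f X = Y) ∧
  (∀ X ∈ PS S, ∀ Y ∈ PS S, f (X + Y) = f X + f Y)

/-- `S` is a numerical semigroup: a subsemigroup of `(ℕ, +)` with finite complement. -/
def IsNumSgp (S : Set ℕ) : Prop :=
  (∀ a ∈ S, ∀ b ∈ S, a + b ∈ S) ∧ (Sᶜ).Finite

/-- `k` is the critical element of `S`: the least `k` with `[k, ∞) ⊆ S`. -/
def IsCritical (S : Set ℕ) (k : ℕ) : Prop :=
  (∀ n, k ≤ n → n ∈ S) ∧ ∀ j, (∀ n, j ≤ n → n ∈ S) → k ≤ j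

namespace StmtAux

/-! ### Generic finset sumset lemmas -/

lemma mem_add' {A B : Finset ℕ} {a : ℕ} : a ∈ A + B ↔ ∃ x ∈ A, ∃ y ∈ B, x + y = a :=
  Finset.mem_add

lemma add_mem_add' {A B : Finset ℕ} {x y : ℕ} (hx : x ∈ A) (hy : y ∈ B) :
    x + y ∈ A + B := Finset.add_mem_add hx hy

lemma min'_add (A B : Finset ℕ) (hA : A.Nonempty) (hB : B.Nonempty) :
    (A + B).min' (hA.add hB) = A.min' hA + B.min' hB := by
  apply le_antisymm
  · exact Finset.min'_le _ _ (add_mem_add' (A.min'_mem hA) (B.min'_mem hB))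
  · apply Finset.le_min'
    intro y hy
    rcases mem_add'.1 hy with ⟨x, hx, z, hz, rfl⟩
    exact Nat.add_le_add (Finset.min'_le _ _ hx) (Finset.min'_le _ _ hz)

lemma max'_add (A B : Finset ℕ) (hA : A.Nonempty) (hB : B.Nonempty) :
    (A + B).max' (hA.add hB) = A.max' hA + B.max' hB := by
  apply le_antisymm
  · apply Finset.max'_le
    intro y hy
    rcases mem_add'.1 hy with ⟨x, hx, z, hz, rfl⟩
    exact Nat.add_le_add (Finset.le_max' _ _ hx) (Finset.le_max' _ _ hz)
  · exact Finset.le_max' _ _ (add_mem_add' (A.max'_mem hA) (B.max'_mem hB))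

lemma singleton_add' (a : ℕ) (B : Finset ℕ) : ({a} : Finset ℕ) + B = B.image (a + ·) := by
  ext x; simp [Finset.mem_add]

lemma singleton_add_cancel {a : ℕ} {B C : Finset ℕ} (h : ({a} : Finset ℕ) + B = {a} + C) :
    B = C := by
  ext x
  constructor <;> intro hx
  · have : a + x ∈ ({a} : Finset ℕ) + C := by
      rw [← h]; exact add_mem_add' (Finset.mem_singleton_self a) hx
    rcases mem_add'.1 this with ⟨u, hu, v, hv, huv⟩
    rw [Finset.mem_singleton] at hu
    have hvx : v = x := by omega
    rwa [← hvx]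
  · have : a + x ∈ ({a} : Finset ℕ) + B := by
      rw [h]; exact add_mem_add' (Finset.mem_singleton_self a) hx
    rcases mem_add'.1 this with ⟨u, hu, v, hv, huv⟩
    rw [Finset.mem_singleton] at hu
    have hvx : v = x := by omega
    rwa [← hvx]

/-! ### The bound `K` -/

lemma exists_bound (S : Set ℕ) (hS : IsNumSgp S) : ∃ K : ℕ, ∀ n, K ≤ n → n ∈ S := by
  classical
  refine ⟨hS.2.toFinset.sup id + 1, ?_⟩
  intro n hn
  by_contra hns
  have : n ∈ hS.2.toFinset := by simpa using hns
  have := Finset.le_sup (f := id) this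
  simp only [id] at this
  omega


/-- `iterSum X n` is the `(n+1)`-fold sumset `X + X + ... + X`. -/
def iterSum (X : Finset ℕ) : ℕ → Finset ℕ
  | 0 => X
  | n+1 => iterSum X n + X

lemma iterSum_nonempty {X : Finset ℕ} (h : X.Nonempty) (n : ℕ) : (iterSum X n).Nonempty := by
  induction n with
  | zero => exact h
  | succ n ih => exact ih.add h

section Main

variable {S : Set ℕ} {K : ℕ} {f : Finset ℕ → Finset ℕ}

lemma mem_PS {X : Finset ℕ} (h1 : X.Nonempty) (h2 : ∀ x ∈ X, x ∈ S) : X ∈ PS S :=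
  ⟨h1, fun x hx => h2 x (by simpa using hx)⟩

lemma PS_nonempty {X : Finset ℕ} (h : X ∈ PS S) : X.Nonempty := h.1

lemma PS_mem {X : Finset ℕ} (h : X ∈ PS S) {x : ℕ} (hx : x ∈ X) : x ∈ S :=
  h.2 (by simpa using hx)

lemma PS_of_bound (hK : ∀ n, K ≤ n → n ∈ S) {X : Finset ℕ}
    (h1 : X.Nonempty) (h2 : ∀ x ∈ X, K ≤ x) : X ∈ PS S :=
  mem_PS h1 (fun x hx => hK x (h2 x hx))

lemma PS_add (hS : IsNumSgp S) {X Y : Finset ℕ} (hX : X ∈ PS S) (hY : Y ∈ PS S) :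
    X + Y ∈ PS S := by
  refine mem_PS (hX.1.add hY.1) ?_
  intro x hx
  rcases mem_add'.1 hx with ⟨u, hu, v, hv, rfl⟩
  exact hS.1 u (PS_mem hX hu) v (PS_mem hY hv)


/-! ### Automorphism basics -/

lemma aut_map (hf : IsPowerAut S f) {X : Finset ℕ} (hX : X ∈ PS S) : f X ∈ PS S :=
  hf.1 X hX

lemma aut_inj (hf : IsPowerAut S f) {X Y : Finset ℕ} (hX : X ∈ PS S) (hY : Y ∈ PS S)
    (h : f X = f Y) : X = Y := hf.2.1 X hX Y hY h

lemma aut_add (hf : IsPowerAut S f) {X Y : Finset ℕ} (hX : X ∈ PS S) (hY : Y ∈ PS S) :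
    f (X + Y) = f X + f Y := hf.2.2.2 X hX Y hY

lemma exists_inv (hS : IsNumSgp S) (hf : IsPowerAut S f) :
    ∃ g : Finset ℕ → Finset ℕ, IsPowerAut S g ∧
      (∀ X ∈ PS S, g (f X) = X) ∧ (∀ X ∈ PS S, f (g X) = X) := by
  classical
  set g : Finset ℕ → Finset ℕ :=
    fun X => if h : X ∈ PS S then (hf.2.2.1 X h).choose else X with hg
  have hgmem : ∀ X ∈ PS S, g X ∈ PS S ∧ f (g X) = X := by
    intro X hX
    have h1 := (hf.2.2.1 X hX).choose_spec
    simp only [hg, dif_pos hX]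
    exact ⟨h1.1, h1.2⟩
  have hfg : ∀ X ∈ PS S, f (g X) = X := fun X hX => (hgmem X hX).2
  have hgf : ∀ X ∈ PS S, g (f X) = X := by
    intro X hX
    have h1 := hgmem (f X) (hf.1 X hX)
    exact aut_inj hf h1.1 hX h1.2
  refine ⟨g, ⟨?_, ?_, ?_, ?_⟩, hgf, hfg⟩
  · intro X hX; exact (hgmem X hX).1
  · intro X hX Y hY h
    have := congrArg f h
    rw [hfg X hX, hfg Y hY] at this; exact this
  · intro Y hY; exact ⟨f Y, hf.1 Y hY, hgf Y hY⟩
  · intro X hX Y hY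
    have hXY : X + Y ∈ PS S := PS_add hS hX hY
    have hgX := hgmem X hX
    have hgY := hgmem Y hY
    have hsum : g X + g Y ∈ PS S := PS_add hS hgX.1 hgY.1
    apply aut_inj hf (hgmem _ hXY).1 hsum
    rw [(hgmem _ hXY).2, aut_add hf hgX.1 hgY.1, hgX.2, hgY.2]


lemma iterSum_PS (hS : IsNumSgp S) {X : Finset ℕ} (hX : X ∈ PS S) (n : ℕ) :
    iterSum X n ∈ PS S := by
  induction n with
  | zero => exact hX
  | succ n ih => exact PS_add hS ih hX

lemma aut_iterSum (hS : IsNumSgp S) (hf : IsPowerAut S f) {X : Finset ℕ} (hX : X ∈ PS S)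
    (n : ℕ) : f (iterSum X n) = iterSum (f X) n := by
  induction n with
  | zero => rfl
  | succ n ih =>
    show f (iterSum X n + X) = iterSum (f X) n + f X
    rw [aut_add hf (iterSum_PS hS hX n) hX, ih]

lemma min'_iterSum {X : Finset ℕ} (h : X.Nonempty) (n : ℕ) :
    (iterSum X n).min' (iterSum_nonempty h n) = (n+1) * X.min' h := by
  induction n with
  | zero => show X.min' h = _; simp
  | succ n ih =>
    show (iterSum X n + X).min' _ = _
    rw [min'_add _ _ (iterSum_nonempty h n) h, ih]; ring

lemma max'_iterSum {X : Finset ℕ} (h : X.Nonempty) (n : ℕ) :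
    (iterSum X n).max' (iterSum_nonempty h n) = (n+1) * X.max' h := by
  induction n with
  | zero => show X.max' h = _; simp
  | succ n ih =>
    show (iterSum X n + X).max' _ = _
    rw [max'_add _ _ (iterSum_nonempty h n) h, ih]; ring

lemma iterSum_singleton (a : ℕ) (n : ℕ) : iterSum ({a} : Finset ℕ) n = {(n+1) * a} := by
  induction n with
  | zero => show ({a} : Finset ℕ) = _; simp
  | succ n ih =>
    show iterSum {a} n + {a} = _
    rw [ih]
    ext x
    simp [mem_add']
    constructor
    · rintro rfl; ring
    · intro hx; rw [hx]; ring


/-! ### Failure of cancellation for non-singletons -/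

lemma exists_noncancel (hK : ∀ n, K ≤ n → n ∈ S) {X : Finset ℕ}
    (hX : X.Nonempty) (hcard : 2 ≤ X.card) :
    ∃ B C : Finset ℕ, B ∈ PS S ∧ C ∈ PS S ∧ B ≠ C ∧ X + B = X + C := by
  set m := X.min' hX with hm
  set M := X.max' hX with hM
  have hmM : m < M := Finset.min'_lt_max'_of_card X (by omega)
  set e := M - m with he
  have he1 : 1 ≤ e := by omega
  set B := Finset.Icc K (K + 2*e) with hB
  set C := B.erase (K + e) with hC
  have hKB : K ∈ B := by simp [hB, Finset.mem_Icc]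
  have hKC : K ∈ C := by
    rw [hC, Finset.mem_erase]; exact ⟨by omega, hKB⟩
  have hCsub : C ⊆ B := Finset.erase_subset _ _
  have hBPS : B ∈ PS S := by
    refine PS_of_bound hK ⟨K, hKB⟩ ?_
    intro x hx; rw [hB, Finset.mem_Icc] at hx; omega
  have hCPS : C ∈ PS S := by
    refine PS_of_bound hK ⟨K, hKC⟩ ?_
    intro x hx
    have := hCsub hx; rw [hB, Finset.mem_Icc] at this; omega
  refine ⟨B, C, hBPS, hCPS, ?_, ?_⟩
  · intro h
    have : (K + e) ∈ C := by rw [← h, hB, Finset.mem_Icc]; omega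
    rw [hC, Finset.mem_erase] at this
    omega
  · apply le_antisymm
    swap
    · exact Finset.add_subset_add_left hCsub
    intro v hv
    rcases mem_add'.1 hv with ⟨x, hxX, b, hbB, rfl⟩
    by_cases hbe : b = K + e
    · subst hbe
      by_cases hxm : x = m
      · subst hxm
        have : m + (K + e) = M + K := by omega
        rw [this]
        exact add_mem_add' (X.max'_mem hX) hKC
      · have hxmlt : m < x := lt_of_le_of_ne (X.min'_le x hxX) (Ne.symm hxm)
        have hxM : x ≤ M := X.le_max' x hxX
        have hcmem : (K + e + (x - m)) ∈ C := by
          rw [hC, Finset.mem_erase, hB, Finset.mem_Icc]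
          constructor
          · omega
          · omega
        have : x + (K + e) = m + (K + e + (x - m)) := by omega
        rw [this]
        exact add_mem_add' (X.min'_mem hX) hcmem
    · have hbC : b ∈ C := by rw [hC, Finset.mem_erase]; exact ⟨hbe, hbB⟩
      exact add_mem_add' hxX hbC


/-! ### Singletons are fixed -/

lemma singleton_PS {a : ℕ} (ha : a ∈ S) : ({a} : Finset ℕ) ∈ PS S :=
  mem_PS ⟨a, Finset.mem_singleton_self a⟩ (by intro x hx; rw [Finset.mem_singleton] at hx; rwa [hx])

lemma aut_singleton_isSingleton (hS : IsNumSgp S) (hK : ∀ n, K ≤ n → n ∈ S)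
    (hf : IsPowerAut S f) {a : ℕ} (ha : a ∈ S) : ∃ b ∈ S, f {a} = {b} := by
  have haPS := singleton_PS (S := S) ha
  have hY := aut_map hf haPS
  by_cases hc : 2 ≤ (f {a}).card
  · exfalso
    obtain ⟨B, C, hB, hC, hBC, hsum⟩ := exists_noncancel hK hY.1 hc
    obtain ⟨B₀, hB₀, rfl⟩ := hf.2.2.1 B hB
    obtain ⟨C₀, hC₀, rfl⟩ := hf.2.2.1 C hC
    have h1 : f ({a} + B₀) = f ({a} + C₀) := by
      rw [aut_add hf haPS hB₀, aut_add hf haPS hC₀, hsum]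
    have h2 := aut_inj hf (PS_add hS haPS hB₀) (PS_add hS haPS hC₀) h1
    exact hBC (congrArg f (singleton_add_cancel h2))
  · have h1 : (f {a}).card = 1 := by
      have := Finset.card_pos.mpr hY.1
      omega
    obtain ⟨b, hb⟩ := Finset.card_eq_one.1 h1
    refine ⟨b, ?_, hb⟩
    exact PS_mem hY (by rw [hb]; exact Finset.mem_singleton_self b)

lemma preimage_singleton_isSingleton (hS : IsNumSgp S) (hK : ∀ n, K ≤ n → n ∈ S)
    (hf : IsPowerAut S f) {X : Finset ℕ} (hX : X ∈ PS S) {c : ℕ} (h : f X = {c}) :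
    ∃ a ∈ S, X = {a} := by
  by_cases hc : 2 ≤ X.card
  · exfalso
    obtain ⟨B, C, hB, hC, hBC, hsum⟩ := exists_noncancel hK hX.1 hc
    have h1 : f (X + B) = f (X + C) := by rw [hsum]
    rw [aut_add hf hX hB, aut_add hf hX hC, h] at h1
    exact hBC (aut_inj hf hB hC (singleton_add_cancel h1))
  · have h1 : X.card = 1 := by
      have := Finset.card_pos.mpr hX.1
      omega
    obtain ⟨a, ha⟩ := Finset.card_eq_one.1 h1
    exact ⟨a, PS_mem hX (by rw [ha]; exact Finset.mem_singleton_self a), ha⟩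

lemma mult_mem (hS : IsNumSgp S) {a : ℕ} (ha : a ∈ S) (n : ℕ) : (n+1) * a ∈ S := by
  induction n with
  | zero => simpa using ha
  | succ n ih =>
    have : (n+1+1) * a = (n+1)*a + a := by ring
    rw [this]
    exact hS.1 _ ih _ ha

lemma sing_le (hS : IsNumSgp S) (hK : ∀ n, K ≤ n → n ∈ S) (hf : IsPowerAut S f) :
    ∀ a ∈ S, ∃ b ∈ S, f {a} = {b} ∧ b ≤ a := by
  classical
  set g : ℕ → ℕ := fun a =>
    if h : (f {a}).Nonempty then (f {a}).min' h else 0 with hgdef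
  have hgspec : ∀ a ∈ S, g a ∈ S ∧ f {a} = {g a} := by
    intro a ha
    obtain ⟨b, hbS, hb⟩ := aut_singleton_isSingleton hS hK hf ha
    have hne : (f {a}).Nonempty := by rw [hb]; exact ⟨b, Finset.mem_singleton_self b⟩
    have hbmem : b ∈ f {a} := by rw [hb]; exact Finset.mem_singleton_self b
    have : g a = b := by
      rw [hgdef]; simp only [dif_pos hne]
      apply le_antisymm (Finset.min'_le _ _ hbmem)
      apply Finset.le_min'
      intro y hy; rw [hb, Finset.mem_singleton] at hy; omega
    rw [this]; exact ⟨hbS, hb⟩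
  have hadd : ∀ a ∈ S, ∀ b ∈ S, g (a + b) = g a + g b := by
    intro a ha b hb
    have h1 : f ({a} + {b}) = {g a} + {g b} := by
      rw [aut_add hf (singleton_PS ha) (singleton_PS hb), (hgspec a ha).2, (hgspec b hb).2]
    have h2 : ({a} : Finset ℕ) + {b} = ({a + b} : Finset ℕ) := by
      ext x; simp [mem_add']
    have h3 : ({g a} : Finset ℕ) + {g b} = ({g a + g b} : Finset ℕ) := by
      ext x; simp [mem_add']
    rw [h2, h3, (hgspec _ (hS.1 a ha b hb)).2] at h1
    exact Finset.singleton_injective h1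
  have hmul : ∀ a ∈ S, ∀ n : ℕ, g ((n+1) * a) = (n+1) * g a := by
    intro a ha n
    induction n with
    | zero => simp
    | succ n ih =>
      have h1 : (n+1+1) * a = (n+1)*a + a := by ring
      have h2 : (n+1+1) * g a = (n+1)*(g a) + g a := by ring
      rw [h1, h2, hadd _ (mult_mem hS ha n) _ ha, ih]
  have hcross : ∀ a ∈ S, ∀ b ∈ S, 1 ≤ a → 1 ≤ b → b * g a = a * g b := by
    intro a ha b hb ha1 hb1
    obtain ⟨a', rfl⟩ : ∃ a', a = a' + 1 := ⟨a - 1, by omega⟩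
    obtain ⟨b', rfl⟩ : ∃ b', b = b' + 1 := ⟨b - 1, by omega⟩
    have h1 := hmul _ ha b'
    have h2 := hmul _ hb a'
    have h3 : (b'+1) * (a'+1) = (a'+1) * (b'+1) := by ring
    rw [h3] at h1
    rw [h1] at h2
    -- h2 : g ((a'+1)*(b'+1)) is both
    omega
  have hg0 : 0 ∈ S → g 0 = 0 := by
    intro h0
    have := hadd 0 h0 0 h0
    simp at this
    omega
  have hsurj : ∀ c ∈ S, ∃ a ∈ S, g a = c := by
    intro c hc
    obtain ⟨X, hX, hXc⟩ := hf.2.2.1 {c} (singleton_PS hc)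
    obtain ⟨a, haS, rfl⟩ := preimage_singleton_isSingleton hS hK hf hX hXc
    refine ⟨a, haS, ?_⟩
    have := (hgspec a haS).2
    rw [hXc] at this
    exact (Finset.singleton_injective this.symm)
  have hle : ∀ a ∈ S, g a ≤ a := by
    by_contra hcon
    push_neg at hcon
    obtain ⟨a, ha, hga⟩ := hcon
    have ha1 : 1 ≤ a := by
      rcases Nat.eq_zero_or_pos a with h | h
      · subst h; have := hg0 ha; omega
      · exact h
    have hmono : ∀ b ∈ S, 1 ≤ b → b < g b := by
      intro b hb hb1
      have := hcross a ha b hb ha1 hb1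
      nlinarith
    have hex : ∃ n, n ∈ S ∧ 1 ≤ n := ⟨K + 1, hK _ (by omega), by omega⟩
    set s₀ := Nat.find hex with hs₀
    have hs₀spec := Nat.find_spec hex
    obtain ⟨a', ha'S, hga'⟩ := hsurj s₀ hs₀spec.1
    have ha'1 : 1 ≤ a' := by
      rcases Nat.eq_zero_or_pos a' with h | h
      · subst h; have := hg0 ha'S; omega
      · exact h
    have h1 : a' < s₀ := by
      have := hmono a' ha'S ha'1
      omega
    exact Nat.find_min hex h1 ⟨ha'S, ha'1⟩
  intro a ha
  exact ⟨g a, (hgspec a ha).1, (hgspec a ha).2, hle a ha⟩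

lemma aut_fixes_singleton (hS : IsNumSgp S) (hK : ∀ n, K ≤ n → n ∈ S)
    (hf : IsPowerAut S f) : ∀ a ∈ S, f {a} = {a} := by
  obtain ⟨g, hg, hgf, hfg⟩ := exists_inv hS hf
  intro a ha
  obtain ⟨b, hbS, hfab, hba⟩ := sing_le hS hK hf a ha
  obtain ⟨c, hcS, hgbc, hcb⟩ := sing_le hS hK hg b hbS
  have : g (f {a}) = {a} := hgf _ (singleton_PS ha)
  rw [hfab, hgbc] at this
  have : c = a := Finset.singleton_injective this
  have : b = a := by omega
  rw [hfab, this]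


/-! ### `f` preserves minima -/

lemma exists_shift {W : Finset ℕ} (hW : W.Nonempty) {s : ℕ} (hs : ∀ w ∈ W, s ≤ w) :
    ∃ Z : Finset ℕ, Z.Nonempty ∧ ({s} : Finset ℕ) + Z = W ∧ (∀ z ∈ Z, ∃ w ∈ W, w = s + z) := by
  refine ⟨W.image (· - s), hW.image _, ?_, ?_⟩
  · ext x
    rw [singleton_add']
    simp only [Finset.mem_image]
    constructor
    · rintro ⟨y, ⟨w, hw, rfl⟩, rfl⟩
      have := hs w hw
      have hxw : s + (w - s) = w := by omega
      rwa [hxw]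
    · intro hx
      exact ⟨x - s, ⟨x, hx, rfl⟩, by have := hs x hx; omega⟩
  · intro z hz
    obtain ⟨w, hw, rfl⟩ := Finset.mem_image.1 hz
    have := hs w hw
    exact ⟨w, hw, by omega⟩

lemma min'_singleton_add {s : ℕ} {Z : Finset ℕ} (hZ : Z.Nonempty) :
    (({s} : Finset ℕ) + Z).min' ((Finset.singleton_nonempty s).add hZ) = s + Z.min' hZ := by
  rw [min'_add _ _ (Finset.singleton_nonempty s) hZ]
  simp

lemma min'_congr {A B : Finset ℕ} (hA : A.Nonempty) (hB : B.Nonempty) (h : A = B) :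
    A.min' hA = B.min' hB := by subst h; rfl

lemma max'_congr {A B : Finset ℕ} (hA : A.Nonempty) (hB : B.Nonempty) (h : A = B) :
    A.max' hA = B.max' hB := by subst h; rfl

set_option maxHeartbeats 1000000 in
lemma aut_min (hS : IsNumSgp S) (hK : ∀ n, K ≤ n → n ∈ S) (hf : IsPowerAut S f)
    (hsing : ∀ a ∈ S, f {a} = {a}) :
    ∀ W, ∀ hW : W ∈ PS S, ∀ h2 : (f W).Nonempty, (f W).min' h2 = W.min' hW.1 := by
  -- inequality A
  have ineqA : ∀ W, ∀ hW : W ∈ PS S, ∀ h2 : (f W).Nonempty,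
      2*K ≤ W.min' hW.1 → W.min' hW.1 ≤ (f W).min' h2 + K := by
    intro W hW h2 hbig
    set s := W.min' hW.1 - K with hsdef
    have hsS : s ∈ S := hK s (by omega)
    obtain ⟨Z, hZne, hZeq, hZmem⟩ := exists_shift hW.1
      (s := s) (fun w hw => by have := W.min'_le w hw; omega)
    have hZPS : Z ∈ PS S := by
      refine PS_of_bound hK hZne ?_
      intro z hz
      obtain ⟨w, hw, hwz⟩ := hZmem z hz
      have := W.min'_le w hw
      omega
    have hfW : f W = ({s} : Finset ℕ) + f Z := by
      rw [← hsing s hsS, ← aut_add hf (singleton_PS hsS) hZPS, hZeq]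
    have hfZne : (f Z).Nonempty := (aut_map hf hZPS).1
    have : (f W).min' h2 = s + (f Z).min' hfZne := by
      rw [min'_congr h2 ((Finset.singleton_nonempty s).add hfZne) hfW]
      exact min'_singleton_add hfZne
    omega
  -- inequality B
  have ineqB : ∀ W, ∀ hW : W ∈ PS S, ∀ h2 : (f W).Nonempty,
      2*K ≤ (f W).min' h2 → (f W).min' h2 ≤ W.min' hW.1 + K := by
    intro W hW h2 hbig
    set s := (f W).min' h2 - K with hsdef
    have hsS : s ∈ S := hK s (by omega)
    obtain ⟨Z, hZne, hZeq, hZmem⟩ := exists_shift h2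
      (s := s) (fun w hw => by have := (f W).min'_le w hw; omega)
    have hZPS : Z ∈ PS S := by
      refine PS_of_bound hK hZne ?_
      intro z hz
      obtain ⟨w, hw, hwz⟩ := hZmem z hz
      have := (f W).min'_le w hw
      omega
    obtain ⟨V₀, hV₀, hfV₀⟩ := hf.2.2.1 Z hZPS
    have h3 : f ({s} + V₀) = f W := by
      rw [aut_add hf (singleton_PS hsS) hV₀, hsing s hsS, hfV₀, hZeq]
    have h4 : ({s} : Finset ℕ) + V₀ = W := aut_inj hf (PS_add hS (singleton_PS hsS) hV₀) hW h3
    have : W.min' hW.1 = s + V₀.min' hV₀.1 := by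
      rw [min'_congr hW.1 ((Finset.singleton_nonempty s).add hV₀.1) h4.symm]
      exact min'_singleton_add hV₀.1
    omega
  -- main for positive min
  have main1 : ∀ W, ∀ hW : W ∈ PS S, ∀ h2 : (f W).Nonempty,
      1 ≤ W.min' hW.1 → (f W).min' h2 = W.min' hW.1 := by
    intro W hW h2 hpos
    set q := W.min' hW.1 with hq
    set p := (f W).min' h2 with hp
    set n := 3*K + K + 1 with hn
    have hWn : iterSum W n ∈ PS S := iterSum_PS hS hW n
    have hWnne := hWn.1
    have hfWn : f (iterSum W n) = iterSum (f W) n := aut_iterSum hS hf hW n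
    have hfWnne : (f (iterSum W n)).Nonempty := (aut_map hf hWn).1
    have hminWn : (iterSum W n).min' hWn.1 = (n+1) * q := min'_iterSum hW.1 n
    have hminfWn : (f (iterSum W n)).min' hfWnne = (n+1) * p := by
      rw [min'_congr hfWnne (iterSum_nonempty h2 n) hfWn]
      exact min'_iterSum h2 n
    have hbig : 2*K ≤ (iterSum W n).min' hWn.1 := by
      rw [hminWn]
      have : n + 1 ≤ (n+1) * q := Nat.le_mul_of_pos_right _ hpos
      omega
    have hA := ineqA _ hWn hfWnne hbig
    rw [hminWn, hminfWn] at hA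
    have hbig2 : 2*K ≤ (f (iterSum W n)).min' hfWnne := by
      rw [hminfWn]
      -- (n+1)*p ≥ (n+1)*q - K ≥ 3K
      have h6 : n + 1 ≤ (n+1) * q := Nat.le_mul_of_pos_right _ hpos
      omega
    have hB := ineqB _ hWn hfWnne hbig2
    rw [hminWn, hminfWn] at hB
    -- (n+1)q ≤ (n+1)p + K, (n+1)p ≤ (n+1)q + K, n+1 > K ⟹ p = q
    rcases lt_trichotomy p q with h | h | h
    · exfalso; nlinarith
    · exact h
    · exfalso; nlinarith
  -- general case
  intro W hW h2
  set t := K + 1 with ht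
  have htS : t ∈ S := hK t (by omega)
  have hW' : ({t} : Finset ℕ) + W ∈ PS S := PS_add hS (singleton_PS htS) hW
  have hfW' : f ({t} + W) = ({t} : Finset ℕ) + f W := by
    rw [aut_add hf (singleton_PS htS) hW, hsing t htS]
  have h2' : (f ({t} + W)).Nonempty := (aut_map hf hW').1
  have hm1 : ({t} + W).min' hW'.1 = t + W.min' hW.1 := min'_singleton_add hW.1
  have hm2 : (f ({t} + W)).min' h2' = t + (f W).min' h2 := by
    rw [min'_congr h2' ((Finset.singleton_nonempty t).add h2) hfW']
    exact min'_singleton_add h2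
  have hpos : 1 ≤ ({t} + W).min' hW'.1 := by rw [hm1]; omega
  have := main1 _ hW' h2' hpos
  omega


/-! ### Coverage lemmas: removing a point from `Y+Y` -/

lemma cover_main {Y : Finset ℕ} {c : ℕ}
    (hdeg : ∀ h ∈ Y, h + h = c → ∃ g ∈ Y, ∃ b ∈ (Y + Y).erase c, g + b = h + h + h) :
    Y + (Y + Y).erase c = Y + Y + Y := by
  apply le_antisymm
  · intro v hv
    rcases mem_add'.1 hv with ⟨g, hg, b, hb, rfl⟩
    rw [Finset.mem_erase] at hb
    rw [add_assoc]
    exact add_mem_add' hg hb.2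
  · intro v hv
    rcases mem_add'.1 hv with ⟨w, hw, g3, hg3, rfl⟩
    rcases mem_add'.1 hw with ⟨g1, hg1, g2, hg2, rfl⟩
    by_cases h23 : g2 + g3 = c
    · by_cases h13 : g1 + g3 = c
      · by_cases h12 : g1 + g2 = c
        · -- degenerate: g1 = g2 = g3
          have he12 : g1 = g2 := by omega
          have he13 : g1 = g3 := by omega
          obtain ⟨g, hg, b, hb, hgb⟩ := hdeg g1 hg1 (by omega)
          have : g1 + g2 + g3 = g1 + g1 + g1 := by omega
          rw [this, ← hgb]
          exact add_mem_add' hg hb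
        · -- use (g3, g1+g2)
          have hb : g1 + g2 ∈ (Y + Y).erase c :=
            Finset.mem_erase.2 ⟨h12, add_mem_add' hg1 hg2⟩
          have : g1 + g2 + g3 = g3 + (g1 + g2) := by ring
          rw [this]
          exact add_mem_add' hg3 hb
      · -- use (g2, g1+g3)
        have hb : g1 + g3 ∈ (Y + Y).erase c :=
          Finset.mem_erase.2 ⟨h13, add_mem_add' hg1 hg3⟩
        have : g1 + g2 + g3 = g2 + (g1 + g3) := by ring
        rw [this]
        exact add_mem_add' hg2 hb
    · have hb : g2 + g3 ∈ (Y + Y).erase c :=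
        Finset.mem_erase.2 ⟨h23, add_mem_add' hg2 hg3⟩
      have : g1 + g2 + g3 = g1 + (g2 + g3) := by ring
      rw [this]
      exact add_mem_add' hg1 hb

lemma cover_low {Y : Finset ℕ} (hY : Y.Nonempty) (h3 : 3 ≤ Y.card)
    (hYe : (Y.erase (Y.min' hY)).Nonempty) :
    Y + (Y + Y).erase (Y.min' hY + (Y.erase (Y.min' hY)).min' hYe) = Y + Y + Y := by
  set x₀ := Y.min' hY with hx₀
  set y₂ := (Y.erase x₀).min' hYe with hy₂
  have hy₂mem : y₂ ∈ Y.erase x₀ := Finset.min'_mem _ hYe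
  have hy₂Y : y₂ ∈ Y := Finset.mem_of_mem_erase hy₂mem
  have hy₂ne : y₂ ≠ x₀ := (Finset.mem_erase.1 hy₂mem).1
  have hy₂gt : x₀ < y₂ := lt_of_le_of_ne (Y.min'_le _ hy₂Y) (Ne.symm hy₂ne)
  apply cover_main
  intro h hh hc
  exfalso
  have hhx : x₀ ≤ h := Y.min'_le _ hh
  by_cases hhx0 : h = x₀
  · omega
  · have : y₂ ≤ h := Finset.min'_le _ _ (Finset.mem_erase.2 ⟨hhx0, hh⟩)
    omega

lemma cover_high {Y : Finset ℕ} (hY : Y.Nonempty) (h3 : 3 ≤ Y.card)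
    (hYe : (Y.erase (Y.min' hY)).Nonempty) :
    Y + (Y + Y).erase ((Y.erase (Y.min' hY)).min' hYe + Y.max' hY) = Y + Y + Y := by
  set x₀ := Y.min' hY with hx₀
  set y₂ := (Y.erase x₀).min' hYe with hy₂
  set M := Y.max' hY with hM
  have hy₂mem : y₂ ∈ Y.erase x₀ := Finset.min'_mem _ hYe
  have hy₂Y : y₂ ∈ Y := Finset.mem_of_mem_erase hy₂mem
  have hy₂ne : y₂ ≠ x₀ := (Finset.mem_erase.1 hy₂mem).1
  have hy₂gt : x₀ < y₂ := lt_of_le_of_ne (Y.min'_le _ hy₂Y) (Ne.symm hy₂ne)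
  have hMY : M ∈ Y := Y.max'_mem hY
  have hcard : 2 ≤ (Y.erase x₀).card := by
    rw [show Y.erase x₀ = Y.erase (Y.min' hY) from rfl,
      Finset.card_erase_of_mem (Y.min'_mem hY)]
    omega
  have hy₂M : y₂ < M := by
    have h1 : y₂ < (Y.erase x₀).max' hYe := Finset.min'_lt_max'_of_card _ (by omega)
    have h2 : (Y.erase x₀).max' hYe ≤ M :=
      Finset.le_max' _ _ (Finset.mem_of_mem_erase ((Y.erase x₀).max'_mem hYe))
    omega
  apply cover_main
  intro h hh hc
  have hhy₂ : h ≠ y₂ := by omega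
  refine ⟨y₂, hy₂Y, h + M, Finset.mem_erase.2 ⟨by omega, add_mem_add' hh hMY⟩, by omega⟩


/-! ### Classification of decompositions of a 4-term AP -/

lemma mem_pair {x δ v : ℕ} : v ∈ ({x, x + δ} : Finset ℕ) ↔ v = x ∨ v = x + δ := by
  simp

lemma mem_tri_pair {x δ v : ℕ} :
    v ∈ ({x, x + δ} : Finset ℕ) + {x, x + δ} + {x, x + δ} ↔
      (v = 3*x ∨ v = 3*x + δ ∨ v = 3*x + 2*δ ∨ v = 3*x + 3*δ) := by
  have hx : x ∈ ({x, x + δ} : Finset ℕ) := by simp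
  have hxd : x + δ ∈ ({x, x + δ} : Finset ℕ) := by simp
  constructor
  · intro hv
    rcases mem_add'.1 hv with ⟨w, hw, c, hc, rfl⟩
    rcases mem_add'.1 hw with ⟨a, ha, b, hb, rfl⟩
    rw [mem_pair] at ha hb hc
    omega
  · intro hv
    rcases hv with hv | hv | hv | hv
    · have : v = (x + x) + x := by omega
      rw [this]; exact add_mem_add' (add_mem_add' hx hx) hx
    · have : v = (x + (x+δ)) + x := by omega
      rw [this]; exact add_mem_add' (add_mem_add' hx hxd) hx
    · have : v = ((x+δ) + (x+δ)) + x := by omega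
      rw [this]; exact add_mem_add' (add_mem_add' hxd hxd) hx
    · have : v = ((x+δ) + (x+δ)) + (x+δ) := by omega
      rw [this]; exact add_mem_add' (add_mem_add' hxd hxd) hxd

lemma pair_nonempty (x δ : ℕ) : ({x, x + δ} : Finset ℕ).Nonempty := ⟨x, by simp⟩

lemma tri_pair_min {x δ : ℕ} (h : (({x, x+δ} : Finset ℕ) + {x,x+δ} + {x,x+δ}).Nonempty) :
    (({x, x+δ} : Finset ℕ) + {x,x+δ} + {x,x+δ}).min' h = 3*x := by
  apply le_antisymm
  · exact Finset.min'_le _ _ (mem_tri_pair.2 (Or.inl rfl))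
  · apply Finset.le_min'
    intro v hv
    have := mem_tri_pair.1 hv
    omega

lemma tri_pair_max {x δ : ℕ} (h : (({x, x+δ} : Finset ℕ) + {x,x+δ} + {x,x+δ}).Nonempty) :
    (({x, x+δ} : Finset ℕ) + {x,x+δ} + {x,x+δ}).max' h = 3*x + 3*δ := by
  apply le_antisymm
  · apply Finset.max'_le
    intro v hv
    have := mem_tri_pair.1 hv
    omega
  · exact Finset.le_max' _ _ (mem_tri_pair.2 (by omega))

lemma eq_pair_of_bounds {A : Finset ℕ} (hA : A.Nonempty) {u v : ℕ}
    (hmin : A.min' hA = u) (hmax : A.max' hA = v)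
    (hsub : ∀ a ∈ A, a = u ∨ a = v) : A = {u, v} := by
  apply Finset.Subset.antisymm
  · intro a ha
    rcases hsub a ha with rfl | rfl <;> simp
  · intro a ha
    rcases Finset.mem_insert.1 ha with rfl | ha
    · rw [← hmin]; exact A.min'_mem hA
    · rw [Finset.mem_singleton] at ha
      subst ha
      rw [← hmax]; exact A.max'_mem hA

lemma classify_AP4 {x δ : ℕ} (hδ : 0 < δ) {A B : Finset ℕ} (hA : A.Nonempty) (hB : B.Nonempty)
    (hA2 : 2 ≤ A.card) (hB2 : 2 ≤ B.card)
    (hminA : A.min' hA = x)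
    (hsum : A + B = ({x, x + δ} : Finset ℕ) + {x, x + δ} + {x, x + δ}) :
    (A = {x, x + δ} ∧ (B = ({2*x, 2*x + δ, 2*x + 2*δ} : Finset ℕ) ∨
        B = ({2*x, 2*x + 2*δ} : Finset ℕ))) ∨ B = ({2*x, 2*x + δ} : Finset ℕ) := by
  have hTne : (({x, x+δ} : Finset ℕ) + {x,x+δ} + {x,x+δ}).Nonempty :=
    ((pair_nonempty x δ).add (pair_nonempty x δ)).add (pair_nonempty x δ)
  have hABne : (A + B).Nonempty := hA.add hB
  have hminsum : A.min' hA + B.min' hB = 3*x := by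
    rw [← min'_add A B hA hB, min'_congr hABne hTne hsum, tri_pair_min hTne]
  have hminB : B.min' hB = 2*x := by omega
  have hmaxsum : A.max' hA + B.max' hB = 3*x + 3*δ := by
    rw [← max'_add A B hA hB, max'_congr hABne hTne hsum, tri_pair_max hTne]
  have hmaxAlb : x < A.max' hA := by
    have := Finset.min'_lt_max'_of_card A (by omega : 1 < A.card)
    omega
  have hmaxBlb : 2*x < B.max' hB := by
    have := Finset.min'_lt_max'_of_card B (by omega : 1 < B.card)
    omega
  have hAel : ∀ a ∈ A, ∃ j, j ≤ 3 ∧ a = x + j*δ := by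
    intro a ha
    have hmem : a + B.min' hB ∈ A + B := add_mem_add' ha (B.min'_mem hB)
    rw [hsum] at hmem
    have h4 := mem_tri_pair.1 hmem
    rw [hminB] at h4
    have hax : x ≤ a := by rw [← hminA]; exact A.min'_le a ha
    rcases h4 with h | h | h | h
    · exact ⟨0, by omega, by omega⟩
    · exact ⟨1, by omega, by omega⟩
    · exact ⟨2, by omega, by omega⟩
    · exact ⟨3, by omega, by omega⟩
  have hBel : ∀ b ∈ B, ∃ j, j ≤ 3 ∧ b = 2*x + j*δ := by
    intro b hb
    have hmem : A.min' hA + b ∈ A + B := add_mem_add' (A.min'_mem hA) hb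
    rw [hsum] at hmem
    have h4 := mem_tri_pair.1 hmem
    rw [hminA] at h4
    have hbx : 2*x ≤ b := by rw [← hminB]; exact B.min'_le b hb
    rcases h4 with h | h | h | h
    · exact ⟨0, by omega, by omega⟩
    · exact ⟨1, by omega, by omega⟩
    · exact ⟨2, by omega, by omega⟩
    · exact ⟨3, by omega, by omega⟩
  obtain ⟨jA, hjA3, hjAeq⟩ := hAel _ (A.max'_mem hA)
  have hjA12 : jA = 1 ∨ jA = 2 := by
    interval_cases jA <;> omega
  rcases hjA12 with hjA | hjA
  · -- A is the pair, B has max 2x+2δ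
    subst hjA
    have hmaxA : A.max' hA = x + δ := by omega
    have hmaxB : B.max' hB = 2*x + 2*δ := by omega
    have hAeq : A = {x, x + δ} := by
      apply eq_pair_of_bounds hA hminA hmaxA
      intro a ha
      obtain ⟨j, hj3, rfl⟩ := hAel a ha
      have : x + j*δ ≤ x + δ := by rw [← hmaxA]; exact A.le_max' _ ha
      interval_cases j <;> omega
    have hBsub : ∀ b ∈ B, b = 2*x ∨ b = 2*x + δ ∨ b = 2*x + 2*δ := by
      intro b hb
      obtain ⟨j, hj3, rfl⟩ := hBel b hb
      have : 2*x + j*δ ≤ 2*x + 2*δ := by rw [← hmaxB]; exact B.le_max' _ hb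
      interval_cases j <;> omega
    left
    refine ⟨hAeq, ?_⟩
    by_cases hmid : 2*x + δ ∈ B
    · left
      apply Finset.Subset.antisymm
      · intro b hb
        rcases hBsub b hb with rfl | rfl | rfl <;> simp
      · intro b hb
        simp only [Finset.mem_insert, Finset.mem_singleton] at hb
        rcases hb with rfl | rfl | rfl
        · rw [← hminB]; exact B.min'_mem hB
        · exact hmid
        · rw [← hmaxB]; exact B.max'_mem hB
    · right
      apply eq_pair_of_bounds hB hminB (by omega : B.max' hB = 2*x + (2*δ))
      intro b hb
      rcases hBsub b hb with rfl | h | rfl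
      · left; rfl
      · exact absurd (h ▸ hb) hmid
      · right; omega
  · -- B is the bottom pair
    subst hjA
    have hmaxB : B.max' hB = 2*x + δ := by omega
    right
    apply eq_pair_of_bounds hB hminB hmaxB
    intro b hb
    obtain ⟨j, hj3, rfl⟩ := hBel b hb
    have : 2*x + j*δ ≤ 2*x + δ := by rw [← hmaxB]; exact B.le_max' _ hb
    interval_cases j <;> omega


/-! ### Pairs map to pairs -/

lemma card_two_struct {Y : Finset ℕ} (hY : Y.Nonempty) (h2 : Y.card = 2) :
    ∀ y ∈ Y, y = Y.min' hY ∨ y = Y.max' hY := by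
  obtain ⟨a, b, hab, rfl⟩ := Finset.card_eq_two.1 h2
  have hmin := Finset.min'_mem ({a, b} : Finset ℕ) hY
  have hmax := Finset.max'_mem ({a, b} : Finset ℕ) hY
  simp only [Finset.mem_insert, Finset.mem_singleton] at hmin hmax
  intro y hy
  simp only [Finset.mem_insert, Finset.mem_singleton] at hy
  have hamin : ({a,b} : Finset ℕ).min' hY ≤ a := Finset.min'_le _ _ (by simp)
  have hbmin : ({a,b} : Finset ℕ).min' hY ≤ b := Finset.min'_le _ _ (by simp)
  have hamax : a ≤ ({a,b} : Finset ℕ).max' hY := Finset.le_max' _ _ (by simp)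
  have hbmax : b ≤ ({a,b} : Finset ℕ).max' hY := Finset.le_max' _ _ (by simp)
  rcases hy with rfl | rfl <;> rcases hmin with h1 | h1 <;> rcases hmax with h2 | h2 <;> omega

lemma aut_pair_is_pair (hS : IsNumSgp S) (hK : ∀ n, K ≤ n → n ∈ S) (hf : IsPowerAut S f)
    (hsing : ∀ a ∈ S, f {a} = {a})
    {x₀ δ : ℕ} (hx₀ : K ≤ x₀) (hδ : 0 < δ) :
    ∃ δ', 0 < δ' ∧ f {x₀, x₀ + δ} = {x₀, x₀ + δ'} := by
  obtain ⟨g, hg, hgf, hfg⟩ := exists_inv hS hf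
  have hsing_g : ∀ a ∈ S, g {a} = {a} := by
    intro a ha
    have := hgf {a} (singleton_PS ha)
    rwa [hsing a ha] at this
  set X : Finset ℕ := {x₀, x₀ + δ} with hXdef
  have hXne : X.Nonempty := pair_nonempty x₀ δ
  have hXPS : X ∈ PS S := by
    refine PS_of_bound hK hXne ?_
    intro z hz
    rw [hXdef, Finset.mem_insert, Finset.mem_singleton] at hz
    omega
  have hXcard : X.card = 2 := by
    rw [hXdef, Finset.card_insert_of_notMem (by intro h; rw [Finset.mem_singleton] at h; omega), Finset.card_singleton]
  have hXmin : X.min' hXne = x₀ := by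
    apply le_antisymm (Finset.min'_le _ _ (by rw [hXdef]; exact Finset.mem_insert_self _ _))
    apply Finset.le_min'
    intro y hy
    rw [hXdef, Finset.mem_insert, Finset.mem_singleton] at hy
    omega
  set Y := f X with hYdef
  have hYPS : Y ∈ PS S := aut_map hf hXPS
  have hYne : Y.Nonempty := hYPS.1
  have hYmin : Y.min' hYne = x₀ := by
    rw [aut_min hS hK hf hsing X hXPS hYne, hXmin]
  have hYcard2 : 2 ≤ Y.card := by
    by_contra hcon
    have h1 : Y.card = 1 := by
      have := Finset.card_pos.mpr hYne
      omega
    obtain ⟨c, hc⟩ := Finset.card_eq_one.1 h1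
    obtain ⟨a, haS, hXa⟩ := preimage_singleton_isSingleton hS hK hf hXPS hc
    rw [hXa] at hXcard
    simp at hXcard
  have hYcard : Y.card = 2 := by
    by_contra hcon
    have h3 : 3 ≤ Y.card := by omega
    -- set up the three partners
    have hYe : (Y.erase (Y.min' hYne)).Nonempty := by
      rw [← Finset.card_pos, Finset.card_erase_of_mem (Y.min'_mem hYne)]
      omega
    set y₂ := (Y.erase (Y.min' hYne)).min' hYe with hy₂def
    set M := Y.max' hYne with hMdef
    have hy₂mem : y₂ ∈ Y.erase (Y.min' hYne) := Finset.min'_mem _ hYe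
    have hy₂Y : y₂ ∈ Y := Finset.mem_of_mem_erase hy₂mem
    have hy₂ne : y₂ ≠ Y.min' hYne := (Finset.mem_erase.1 hy₂mem).1
    have hy₂gt : x₀ < y₂ := by
      have h1 := Y.min'_le _ hy₂Y
      rw [hYmin] at h1
      have h2 := hy₂ne
      rw [hYmin] at h2
      omega
    have hMY : M ∈ Y := Y.max'_mem hYne
    have hy₂M : y₂ < M := by
      have hcard2 : 2 ≤ (Y.erase (Y.min' hYne)).card := by
        rw [Finset.card_erase_of_mem (Y.min'_mem hYne)]
        omega
      have h1 : y₂ < (Y.erase (Y.min' hYne)).max' hYe :=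
        Finset.min'_lt_max'_of_card _ (by omega)
      have h2 : (Y.erase (Y.min' hYne)).max' hYe ≤ M :=
        Finset.le_max' _ _ (Finset.mem_of_mem_erase ((Y.erase (Y.min' hYne)).max'_mem hYe))
      omega
    have hx₀M : x₀ < M := by
      have := Y.le_max' _ hy₂Y
      omega
    set c₂ := Y.min' hYne + y₂ with hc₂def
    set c₃ := y₂ + M with hc₃def
    set B₁ := Y + Y with hB₁def
    set B₂ := (Y + Y).erase c₂ with hB₂def
    set B₃ := (Y + Y).erase c₃ with hB₃def
    have hYYPS : Y + Y ∈ PS S := PS_add hS hYPS hYPS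
    have h2x₀ : x₀ + x₀ ∈ Y + Y := by
      have := add_mem_add' (Y.min'_mem hYne) (Y.min'_mem hYne)
      rwa [hYmin] at this
    have h2M : M + M ∈ Y + Y := add_mem_add' hMY hMY
    have hc₂val : c₂ = x₀ + y₂ := by rw [hc₂def, hYmin]
    have h2x₀B₂ : x₀ + x₀ ∈ B₂ := Finset.mem_erase.2 ⟨by omega, h2x₀⟩
    have h2x₀B₃ : x₀ + x₀ ∈ B₃ := Finset.mem_erase.2 ⟨by omega, h2x₀⟩
    have h2MB₂ : M + M ∈ B₂ := Finset.mem_erase.2 ⟨by omega, h2M⟩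
    have h2MB₃ : M + M ∈ B₃ := Finset.mem_erase.2 ⟨by omega, h2M⟩
    have hB₂PS : B₂ ∈ PS S := by
      refine PS_of_bound hK ⟨_, h2x₀B₂⟩ ?_
      intro z hz
      have hzYY := Finset.mem_of_mem_erase hz
      rcases mem_add'.1 hzYY with ⟨u, hu, v, hv, rfl⟩
      have := Y.min'_le u hu
      rw [hYmin] at this
      omega
    have hB₃PS : B₃ ∈ PS S := by
      refine PS_of_bound hK ⟨_, h2x₀B₃⟩ ?_
      intro z hz
      have hzYY := Finset.mem_of_mem_erase hz
      rcases mem_add'.1 hzYY with ⟨u, hu, v, hv, rfl⟩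
      have := Y.min'_le u hu
      rw [hYmin] at this
      omega
    have hB₁card : 2 ≤ B₁.card := Finset.one_lt_card.2 ⟨_, h2x₀, _, h2M, by omega⟩
    have hB₂card : 2 ≤ B₂.card := Finset.one_lt_card.2 ⟨_, h2x₀B₂, _, h2MB₂, by omega⟩
    have hB₃card : 2 ≤ B₃.card := Finset.one_lt_card.2 ⟨_, h2x₀B₃, _, h2MB₃, by omega⟩
    have hc₂YY : c₂ ∈ Y + Y := by
      rw [hc₂def]; exact add_mem_add' (Y.min'_mem hYne) hy₂Y
    have hc₃YY : c₃ ∈ Y + Y := add_mem_add' hy₂Y hMY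
    have hB12 : B₁ ≠ B₂ := by
      intro h
      have : c₂ ∈ B₂ := h ▸ hc₂YY
      exact (Finset.mem_erase.1 this).1 rfl
    have hB13 : B₁ ≠ B₃ := by
      intro h
      have : c₃ ∈ B₃ := h ▸ hc₃YY
      exact (Finset.mem_erase.1 this).1 rfl
    have hB23 : B₂ ≠ B₃ := by
      intro h
      have hc₃B₂ : c₃ ∈ B₂ := Finset.mem_erase.2 ⟨by omega, hc₃YY⟩
      rw [h] at hc₃B₂
      exact (Finset.mem_erase.1 hc₃B₂).1 rfl
    -- sums
    have hsum1 : Y + B₁ = Y + Y + Y := (add_assoc Y Y Y).symm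
    have hsum2 : Y + B₂ = Y + Y + Y := cover_low hYne h3 hYe
    have hsum3 : Y + B₃ = Y + Y + Y := cover_high hYne h3 hYe
    -- transport through the inverse
    have hTRIX : X + X + X ∈ PS S := PS_add hS (PS_add hS hXPS hXPS) hXPS
    have hfTRI : f (X + X + X) = Y + Y + Y := by
      rw [aut_add hf (PS_add hS hXPS hXPS) hXPS, aut_add hf hXPS hXPS]
    set C := g Y with hCdef
    have hCPS : C ∈ PS S := (hg.1 Y hYPS)
    have hfC : f C = Y := hfg Y hYPS
    have hCmin : C.min' hCPS.1 = x₀ := by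
      rw [aut_min hS hK hg hsing_g Y hYPS hCPS.1, hYmin]
    have hCcard : 2 ≤ C.card := by
      by_contra hcon2
      have h1 : C.card = 1 := by
        have := Finset.card_pos.mpr hCPS.1
        omega
      obtain ⟨u, hu⟩ := Finset.card_eq_one.1 h1
      have huS : u ∈ S := PS_mem hCPS (hu ▸ Finset.mem_singleton_self u)
      have : Y = {u} := by rw [← hfC, hu, hsing u huS]
      rw [this] at h3
      simp at h3
    have key : ∀ B : Finset ℕ, B ∈ PS S → 2 ≤ B.card → Y + B = Y + Y + Y →
        (g B) ∈ PS S ∧ 2 ≤ (g B).card ∧ C + g B = X + X + X := by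
      intro B hBPS hBcard hBsum
      have hDPS : g B ∈ PS S := hg.1 B hBPS
      have hfD : f (g B) = B := hfg B hBPS
      have hDcard : 2 ≤ (g B).card := by
        by_contra hcon2
        have h1 : (g B).card = 1 := by
          have := Finset.card_pos.mpr hDPS.1
          omega
        obtain ⟨u, hu⟩ := Finset.card_eq_one.1 h1
        have huS : u ∈ S := PS_mem hDPS (hu ▸ Finset.mem_singleton_self u)
        have : B = {u} := by rw [← hfD, hu, hsing u huS]
        rw [this] at hBcard
        simp at hBcard
      refine ⟨hDPS, hDcard, ?_⟩
      apply aut_inj hf (PS_add hS hCPS hDPS) hTRIX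
      rw [aut_add hf hCPS hDPS, hfC, hfD, hfTRI, hBsum]
    obtain ⟨hD1PS, hD1card, hD1sum⟩ := key B₁ hYYPS hB₁card hsum1
    obtain ⟨hD2PS, hD2card, hD2sum⟩ := key B₂ hB₂PS hB₂card hsum2
    obtain ⟨hD3PS, hD3card, hD3sum⟩ := key B₃ hB₃PS hB₃card hsum3
    have hD12 : g B₁ ≠ g B₂ := by
      intro h
      exact hB12 (by rw [← hfg B₁ hYYPS, ← hfg B₂ hB₂PS, h])
    have hD13 : g B₁ ≠ g B₃ := by
      intro h
      exact hB13 (by rw [← hfg B₁ hYYPS, ← hfg B₃ hB₃PS, h])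
    have hD23 : g B₂ ≠ g B₃ := by
      intro h
      exact hB23 (by rw [← hfg B₂ hB₂PS, ← hfg B₃ hB₃PS, h])
    have hclass := fun (B : Finset ℕ) (h1 : g B ∈ PS S) (h2 : 2 ≤ (g B).card)
        (h3 : C + g B = X + X + X) =>
      classify_AP4 hδ hCPS.1 h1.1 hCcard h2 hCmin (by rw [h3, hXdef])
    have hc1 := hclass B₁ hD1PS hD1card hD1sum
    have hc2 := hclass B₂ hD2PS hD2card hD2sum
    have hc3 := hclass B₃ hD3PS hD3card hD3sum
    -- if C = X then D ≠ bottom pair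
    have hnotP : ∀ B : Finset ℕ, C + g B = X + X + X → C = X →
        g B ≠ ({2*x₀, 2*x₀ + δ} : Finset ℕ) := by
      intro B hBsum hCX hDP
      rw [hCX, hDP] at hBsum
      have hmem : 3*x₀ + 3*δ ∈ X + X + X := by
        rw [hXdef]; exact mem_tri_pair.2 (by omega)
      rw [← hBsum] at hmem
      rcases mem_add'.1 hmem with ⟨u, hu, v, hv, huv⟩
      rw [hXdef, Finset.mem_insert, Finset.mem_singleton] at hu
      simp only [Finset.mem_insert, Finset.mem_singleton] at hv
      omega
    by_cases hCX : C = X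
    · have hd1 : g B₁ = ({2*x₀, 2*x₀+δ, 2*x₀+2*δ} : Finset ℕ) ∨
          g B₁ = ({2*x₀, 2*x₀+2*δ} : Finset ℕ) := by
        rcases hc1 with ⟨_, h⟩ | h
        · exact h
        · exact absurd h (hnotP B₁ hD1sum hCX)
      have hd2 : g B₂ = ({2*x₀, 2*x₀+δ, 2*x₀+2*δ} : Finset ℕ) ∨
          g B₂ = ({2*x₀, 2*x₀+2*δ} : Finset ℕ) := by
        rcases hc2 with ⟨_, h⟩ | h
        · exact h
        · exact absurd h (hnotP B₂ hD2sum hCX)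
      have hd3 : g B₃ = ({2*x₀, 2*x₀+δ, 2*x₀+2*δ} : Finset ℕ) ∨
          g B₃ = ({2*x₀, 2*x₀+2*δ} : Finset ℕ) := by
        rcases hc3 with ⟨_, h⟩ | h
        · exact h
        · exact absurd h (hnotP B₃ hD3sum hCX)
      rcases hd1 with h1 | h1 <;> rcases hd2 with h2 | h2 <;> rcases hd3 with h3' | h3'
      · exact hD12 (h1.trans h2.symm)
      · exact hD12 (h1.trans h2.symm)
      · exact hD13 (h1.trans h3'.symm)
      · exact hD23 (h2.trans h3'.symm)
      · exact hD23 (h2.trans h3'.symm)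
      · exact hD13 (h1.trans h3'.symm)
      · exact hD12 (h1.trans h2.symm)
      · exact hD12 (h1.trans h2.symm)
    · have hd1 : g B₁ = ({2*x₀, 2*x₀ + δ} : Finset ℕ) := by
        rcases hc1 with ⟨h, _⟩ | h
        · exact absurd h hCX
        · exact h
      have hd2 : g B₂ = ({2*x₀, 2*x₀ + δ} : Finset ℕ) := by
        rcases hc2 with ⟨h, _⟩ | h
        · exact absurd h hCX
        · exact h
      exact hD12 (hd1.trans hd2.symm)
  -- now |Y| = 2
  set δ' := Y.max' hYne - x₀ with hδ'def
  have hmm : x₀ < Y.max' hYne := by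
    have := Finset.min'_lt_max'_of_card Y (by omega : 1 < Y.card)
    omega
  refine ⟨δ', by omega, ?_⟩
  have hmaxY : Y.max' hYne = x₀ + δ' := by omega
  exact eq_pair_of_bounds hYne hYmin hmaxY (fun y hy => by
    rcases card_two_struct hYne hYcard y hy with h | h
    · left; omega
    · right; omega)


/-! ### Arithmetic progressions and divisibility by pairs -/

lemma pair_min {x b : ℕ} (h : ({x, x + b} : Finset ℕ).Nonempty) :
    ({x, x + b} : Finset ℕ).min' h = x := by
  apply le_antisymm (Finset.min'_le _ _ (by simp))
  apply Finset.le_min'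
  intro y hy
  rcases mem_pair.1 hy with rfl | rfl <;> omega

lemma pair_max {x b : ℕ} (h : ({x, x + b} : Finset ℕ).Nonempty) :
    ({x, x + b} : Finset ℕ).max' h = x + b := by
  apply le_antisymm
  · apply Finset.max'_le
    intro y hy
    rcases mem_pair.1 hy with rfl | rfl <;> omega
  · exact Finset.le_max' _ _ (by simp)

lemma mem_iterSum_pair {x s : ℕ} (n : ℕ) {v : ℕ} :
    v ∈ iterSum ({x, x + s} : Finset ℕ) n ↔ ∃ j, j ≤ n + 1 ∧ v = (n+1)*x + j*s := by
  induction n generalizing v with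
  | zero =>
    constructor
    · intro hv
      rcases mem_pair.1 hv with rfl | rfl
      · exact ⟨0, by omega, by ring⟩
      · exact ⟨1, by omega, by ring⟩
    · rintro ⟨j, hj, rfl⟩
      interval_cases j
      · exact mem_pair.2 (Or.inl (by ring))
      · exact mem_pair.2 (Or.inr (by ring))
  | succ n ih =>
    constructor
    · intro hv
      rcases mem_add'.1 hv with ⟨w, hw, p, hp, rfl⟩
      obtain ⟨j, hj, rfl⟩ := ih.1 hw
      rcases mem_pair.1 hp with rfl | rfl
      · exact ⟨j, by omega, by ring⟩
      · exact ⟨j + 1, by omega, by ring⟩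
    · rintro ⟨j, hj, rfl⟩
      by_cases hjn : j ≤ n + 1
      · have hw : (n+1)*x + j*s ∈ iterSum ({x, x + s} : Finset ℕ) n :=
          ih.2 ⟨j, hjn, rfl⟩
        have : (n+1+1)*x + j*s = ((n+1)*x + j*s) + x := by ring
        rw [this]
        exact add_mem_add' hw (mem_pair.2 (Or.inl rfl))
      · have hj1 : j - 1 ≤ n + 1 := by omega
        have hw : (n+1)*x + (j-1)*s ∈ iterSum ({x, x + s} : Finset ℕ) n :=
          ih.2 ⟨j - 1, hj1, rfl⟩
        have : (n+1+1)*x + j*s = ((n+1)*x + (j-1)*s) + (x + s) := by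
          have h2 : (j-1)*s + s = j*s := by
            rw [Nat.sub_one_mul]
            have : s ≤ j * s := Nat.le_mul_of_pos_left s (by omega)
            omega
          have h3 : (n+1+1)*x = (n+1)*x + x := by ring
          omega
        rw [this]
        exact add_mem_add' hw (mem_pair.2 (Or.inr rfl))

lemma AP_nonempty {base s m : ℕ} (hm : 0 < m) :
    ((Finset.range (2*m)).image (fun j => base + j*s)).Nonempty :=
  ⟨base, Finset.mem_image.2 ⟨0, Finset.mem_range.2 (by omega), by ring⟩⟩

lemma AP_min {base s m : ℕ} (hm : 0 < m) :
    ((Finset.range (2*m)).image (fun j => base + j*s)).min' (AP_nonempty hm) = base := by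
  apply le_antisymm
  · exact Finset.min'_le _ _ (Finset.mem_image.2 ⟨0, Finset.mem_range.2 (by omega), by ring⟩)
  · apply Finset.le_min'
    intro y hy
    rcases Finset.mem_image.1 hy with ⟨j, _, rfl⟩
    omega

lemma AP_max {base s m : ℕ} (hm : 0 < m) :
    ((Finset.range (2*m)).image (fun j => base + j*s)).max' (AP_nonempty hm)
      = base + (2*m-1)*s := by
  apply le_antisymm
  · apply Finset.max'_le
    intro y hy
    rcases Finset.mem_image.1 hy with ⟨j, hj, rfl⟩
    rw [Finset.mem_range] at hj
    have : j * s ≤ (2*m-1)*s := Nat.mul_le_mul_right s (by omega)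
    omega
  · apply Finset.le_max'
    exact Finset.mem_image.2 ⟨2*m-1, Finset.mem_range.2 (by omega), rfl⟩

lemma pair_divides_AP {x b s base m : ℕ} (hb : 0 < b) (hs : 0 < s) (hm : 0 < m)
    {C : Finset ℕ} (hC : C.Nonempty)
    (hsum : ({x, x + b} : Finset ℕ) + C
      = (Finset.range (2*m)).image (fun j => base + j*s)) :
    ∃ j, b = s*j ∧ 1 ≤ j ∧ j ≤ m := by
  have hPne : ({x, x + b} : Finset ℕ).Nonempty := pair_nonempty x b
  have hAPne := AP_nonempty (base := base) (s := s) hm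
  have hsumne : (({x, x + b} : Finset ℕ) + C).Nonempty := hPne.add hC
  set γ := C.min' hC with hγ
  set Γ := C.max' hC with hΓ
  have hminAP : x + γ = base := by
    have h1 := min'_add _ _ hPne hC
    rw [min'_congr hsumne hAPne hsum, AP_min hm, pair_min hPne] at h1
    omega
  have hmaxAP : x + b + Γ = base + (2*m-1)*s := by
    have h1 := max'_add _ _ hPne hC
    rw [max'_congr hsumne hAPne hsum, AP_max hm, pair_max hPne] at h1
    omega
  -- locate b on the progression
  have hmem : (x + b) + γ ∈ ({x, x + b} : Finset ℕ) + C :=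
    add_mem_add' (by simp) (C.min'_mem hC)
  rw [hsum] at hmem
  rcases Finset.mem_image.1 hmem with ⟨j, hjmem, hjeq⟩
  rw [Finset.mem_range] at hjmem
  have hbjs : b = j*s := by omega
  have hj1 : 1 ≤ j := by
    rcases Nat.eq_zero_or_pos j with rfl | h
    · simp at hbjs; omega
    · exact h
  refine ⟨j, by rw [Nat.mul_comm s j]; omega, hj1, ?_⟩
  by_contra hjm
  push_neg at hjm
  -- the element base + (j-1) s is not covered
  have hwmem : base + (j*s - s) ∈ (Finset.range (2*m)).image (fun i => base + i*s) := by
    refine Finset.mem_image.2 ⟨j - 1, Finset.mem_range.2 (by omega), ?_⟩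
    rw [Nat.sub_one_mul]
  rw [← hsum] at hwmem
  rcases mem_add'.1 hwmem with ⟨u, hu, c, hc, huc⟩
  have hcγ : γ ≤ c := C.min'_le c hc
  have hcΓ : c ≤ Γ := C.le_max' c hc
  have hsj : s ≤ j * s := Nat.le_mul_of_pos_left s (by omega)
  rcases mem_pair.1 hu with rfl | rfl
  · -- u = x : c = γ + j s - s, compare with Γ
    have hceq : c = γ + (j*s - s) := by omega
    -- Γ = γ + (2m-1) s - j s
    have hΓeq : Γ + j*s = γ + (2*m-1)*s := by omega
    -- hence (2j - 2) s ≤ (2m - 2) s giving j ≤ m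
    have h2 : (j*s - s) + j*s ≤ (2*m-1)*s := by omega
    have e1 : (2*m-1)*s + s = 2*m*s := by
      rw [Nat.sub_one_mul]
      have : s ≤ 2*m*s := Nat.le_mul_of_pos_left s (by omega)
      omega
    have e2 : 2*m*s = 2*(m*s) := by ring
    have h7 : j*s ≤ m*s := by omega
    have h8 : j ≤ m := Nat.le_of_mul_le_mul_right h7 hs
    omega
  · -- u = x + b: impossible, c would be below γ
    omega

lemma pair_div_AP_exists {x s j m c₀ : ℕ} (hs : 0 < s) (hj1 : 1 ≤ j) (hjm : j ≤ m) :
    ({x, x + j*s} : Finset ℕ) + (Finset.range (2*m - j)).image (fun i => c₀ + i*s)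
      = (Finset.range (2*m)).image (fun i => (x + c₀) + i*s) := by
  ext v
  constructor
  · intro hv
    rcases mem_add'.1 hv with ⟨u, hu, w, hw, rfl⟩
    rcases Finset.mem_image.1 hw with ⟨i, hi, rfl⟩
    rw [Finset.mem_range] at hi
    rcases mem_pair.1 hu with rfl | rfl
    · exact Finset.mem_image.2 ⟨i, Finset.mem_range.2 (by omega), by ring⟩
    · refine Finset.mem_image.2 ⟨i + j, Finset.mem_range.2 (by omega), ?_⟩
      rw [Nat.add_mul]
      ring
  · intro hv
    rcases Finset.mem_image.1 hv with ⟨i, hi, rfl⟩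
    rw [Finset.mem_range] at hi
    by_cases hij : i < 2*m - j
    · have hw : c₀ + i*s ∈ (Finset.range (2*m - j)).image (fun i => c₀ + i*s) :=
        Finset.mem_image.2 ⟨i, Finset.mem_range.2 hij, rfl⟩
      have : (x + c₀) + i*s = x + (c₀ + i*s) := by ring
      rw [this]
      exact add_mem_add' (mem_pair.2 (Or.inl rfl)) hw
    · have hji : j ≤ i := by omega
      have hw : c₀ + (i-j)*s ∈ (Finset.range (2*m - j)).image (fun i => c₀ + i*s) :=
        Finset.mem_image.2 ⟨i - j, Finset.mem_range.2 (by omega), rfl⟩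
      have : (x + c₀) + i*s = (x + j*s) + (c₀ + (i-j)*s) := by
        have h2 : j*s + (i-j)*s = i*s := by
          rw [← Nat.add_mul, Nat.add_sub_cancel' hji]
        omega
      rw [this]
      exact add_mem_add' (mem_pair.2 (Or.inr rfl)) hw

lemma T_char (x s m : ℕ) (hm : 0 < m) :
    ({x} : Finset ℕ) + iterSum ({x, x + s} : Finset ℕ) (2*m - 2)
      = (Finset.range (2*m)).image (fun j => 2*m*x + j*s) := by
  ext v
  constructor
  · intro hv
    rcases mem_add'.1 hv with ⟨u, hu, w, hw, rfl⟩
    rw [Finset.mem_singleton] at hu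
    rw [hu]
    obtain ⟨j, hj, rfl⟩ := (mem_iterSum_pair (2*m-2)).1 hw
    refine Finset.mem_image.2 ⟨j, Finset.mem_range.2 (by omega), ?_⟩
    have : (2*m - 2 + 1) * x = (2*m - 1) * x := by
      congr 1
      omega
    rw [this]
    have h2 : x + (2*m-1)*x = 2*m*x := by
      rw [Nat.sub_one_mul]
      have : x ≤ 2*m*x := Nat.le_mul_of_pos_left x (by omega)
      omega
    omega
  · intro hv
    rcases Finset.mem_image.1 hv with ⟨j, hj, rfl⟩
    rw [Finset.mem_range] at hj
    have hw : (2*m-2+1)*x + j*s ∈ iterSum ({x, x + s} : Finset ℕ) (2*m-2) :=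
      (mem_iterSum_pair (2*m-2)).2 ⟨j, by omega, rfl⟩
    have : 2*m*x + j*s = x + ((2*m-2+1)*x + j*s) := by
      have h1 : (2*m-2+1) = 2*m - 1 := by omega
      rw [h1, Nat.sub_one_mul]
      have : x ≤ 2*m*x := Nat.le_mul_of_pos_left x (by omega)
      omega
    rw [this]
    exact add_mem_add' (Finset.mem_singleton_self x) hw


/-! ### All pairs with min `≥ K` are fixed -/

lemma pair_inj {x u v : ℕ} (h : ({x, x+u} : Finset ℕ) = {x, x+v}) : u = v := by
  have h1 := pair_max (pair_nonempty x u)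
  have h2 := pair_max (pair_nonempty x v)
  have h3 := max'_congr (pair_nonempty x u) (pair_nonempty x v) h
  omega

lemma pair_PS (hK : ∀ n, K ≤ n → n ∈ S) {x a : ℕ} (hx : K ≤ x) :
    ({x, x + a} : Finset ℕ) ∈ PS S := by
  refine PS_of_bound hK (pair_nonempty x a) ?_
  intro z hz
  rcases mem_pair.1 hz with rfl | rfl <;> omega

lemma aut_fixes_pair (hS : IsNumSgp S) (hK : ∀ n, K ≤ n → n ∈ S) (hf : IsPowerAut S f)
    (hsing : ∀ a ∈ S, f {a} = {a}) {x₀ : ℕ} (hx₀ : K ≤ x₀) :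
    ∀ a, 0 < a → f {x₀, x₀ + a} = {x₀, x₀ + a} := by
  obtain ⟨g, hg, hgf, hfg⟩ := exists_inv hS hf
  have hsing_g : ∀ a ∈ S, g {a} = {a} := by
    intro a ha
    have := hgf {a} (singleton_PS ha)
    rwa [hsing a ha] at this
  obtain ⟨s₁, hs₁, hf1⟩ := aut_pair_is_pair hS hK hf hsing hx₀ one_pos
  have hx₀S : x₀ ∈ S := hK _ hx₀
  -- the long interval-like sets and their images
  have hTPS : ∀ m : ℕ, 0 < m →
      ({x₀} : Finset ℕ) + iterSum ({x₀, x₀ + 1} : Finset ℕ) (2*m-2) ∈ PS S := by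
    intro m hm
    exact PS_add hS (singleton_PS hx₀S) (iterSum_PS hS (pair_PS hK hx₀) _)
  have hT : ∀ m : ℕ, 0 < m →
      f (({x₀} : Finset ℕ) + iterSum ({x₀, x₀ + 1} : Finset ℕ) (2*m-2))
        = (Finset.range (2*m)).image (fun j => 2*m*x₀ + j*s₁) := by
    intro m hm
    rw [aut_add hf (singleton_PS hx₀S) (iterSum_PS hS (pair_PS hK hx₀) _),
      hsing _ hx₀S, aut_iterSum hS hf (pair_PS hK hx₀), hf1, T_char x₀ s₁ m hm]
  have hbase : ∀ m : ℕ, 0 < m → x₀ + (2*m-1)*x₀ = 2*m*x₀ := by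
    intro m hm
    rw [Nat.sub_one_mul]
    have : x₀ ≤ 2*m*x₀ := Nat.le_mul_of_pos_left x₀ (by omega)
    omega
  -- forward direction
  have Dfwd : ∀ a sa m : ℕ, 0 < a → 0 < sa → 0 < m → a ≤ m →
      f {x₀, x₀ + a} = {x₀, x₀ + sa} → ∃ j, sa = s₁*j ∧ 1 ≤ j ∧ j ≤ m := by
    intro a sa m ha hsa hm ham hfa
    set C := (Finset.range (2*m - a)).image (fun i => (2*m-1)*x₀ + i*1) with hCdef
    have hCdiv := pair_div_AP_exists (x := x₀) (s := 1) (j := a) (m := m)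
      (c₀ := (2*m-1)*x₀) one_pos (by omega) ham
    rw [mul_one a, hbase m hm] at hCdiv
    have hCne : C.Nonempty := by
      refine ⟨(2*m-1)*x₀ + 0*1, Finset.mem_image.2 ⟨0, Finset.mem_range.2 (by omega), rfl⟩⟩
    have hCPS : C ∈ PS S := by
      refine PS_of_bound hK hCne ?_
      intro z hz
      rcases Finset.mem_image.1 hz with ⟨i, _, rfl⟩
      have : x₀ ≤ (2*m-1)*x₀ := Nat.le_mul_of_pos_left x₀ (by omega)
      omega
    have h1 : f ({x₀, x₀ + a} + C) = {x₀, x₀ + sa} + f C := by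
      rw [aut_add hf (pair_PS hK hx₀) hCPS, hfa]
    -- identify the image of the AP
    have h2 : ({x₀, x₀ + a} : Finset ℕ) + C
        = ({x₀} : Finset ℕ) + iterSum ({x₀, x₀ + 1} : Finset ℕ) (2*m-2) := by
      rw [hCdiv, T_char x₀ 1 m hm]
    rw [h2, hT m hm] at h1
    exact pair_divides_AP hsa hs₁ hm (aut_map hf hCPS).1 h1.symm
  -- backward direction
  have Dbwd : ∀ a sa j m : ℕ, 0 < a → 0 < sa → 0 < m → sa = s₁*j → 1 ≤ j → j ≤ m →
      f {x₀, x₀ + a} = {x₀, x₀ + sa} → a ≤ m := by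
    intro a sa j m ha hsa hm hsaj hj1 hjm hfa
    set C := (Finset.range (2*m - j)).image (fun i => (2*m-1)*x₀ + i*s₁) with hCdef
    have hCdiv := pair_div_AP_exists (x := x₀) (s := s₁) (j := j) (m := m)
      (c₀ := (2*m-1)*x₀) hs₁ hj1 hjm
    rw [hbase m hm] at hCdiv
    have hjs : j * s₁ = sa := by rw [hsaj, Nat.mul_comm]
    rw [hjs] at hCdiv
    have hCne : C.Nonempty := by
      refine ⟨(2*m-1)*x₀ + 0*s₁, Finset.mem_image.2 ⟨0, Finset.mem_range.2 (by omega), rfl⟩⟩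
    have hCPS : C ∈ PS S := by
      refine PS_of_bound hK hCne ?_
      intro z hz
      rcases Finset.mem_image.1 hz with ⟨i, _, rfl⟩
      have : x₀ ≤ (2*m-1)*x₀ := Nat.le_mul_of_pos_left x₀ (by omega)
      omega
    -- apply g to both sides of hCdiv
    have hgpair : g {x₀, x₀ + sa} = {x₀, x₀ + a} := by
      rw [← hfa]
      exact hgf _ (pair_PS hK hx₀)
    have hgAP : g ((Finset.range (2*m)).image (fun i => 2*m*x₀ + i*s₁))
        = ({x₀} : Finset ℕ) + iterSum ({x₀, x₀ + 1} : Finset ℕ) (2*m-2) := by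
      rw [← hT m hm]
      exact hgf _ (hTPS m hm)
    have h1 : g ({x₀, x₀ + sa} + C) = {x₀, x₀ + a} + g C := by
      rw [aut_add hg (pair_PS hK hx₀) hCPS, hgpair]
    rw [hCdiv, hgAP, T_char x₀ 1 m hm] at h1
    obtain ⟨j', hj'eq, hj'1, hj'm⟩ :=
      pair_divides_AP ha one_pos hm (hg.1 C hCPS).1 h1.symm
    omega
  -- σ is multiplication by s₁
  have hsig : ∀ a sa : ℕ, 0 < a → 0 < sa → f {x₀, x₀ + a} = {x₀, x₀ + sa} →
      sa = s₁ * a := by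
    intro a sa ha hsa hfa
    obtain ⟨j, hjeq, hj1, hja⟩ := Dfwd a sa a ha hsa ha le_rfl hfa
    have haj : a ≤ j := Dbwd a sa j j ha hsa (by omega) hjeq hj1 le_rfl hfa
    have : j = a := by omega
    rw [hjeq, this]
  -- s₁ = 1 via surjectivity
  obtain ⟨e, he, hg1⟩ := aut_pair_is_pair hS hK hg hsing_g hx₀ one_pos
  have hfe : f {x₀, x₀ + e} = {x₀, x₀ + 1} := by
    rw [← hg1]
    exact hfg _ (pair_PS hK hx₀)
  have hse : (1 : ℕ) = s₁ * e := hsig e 1 he one_pos hfe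
  have hs₁1 : s₁ = 1 := by
    rcases Nat.eq_one_of_mul_eq_one_right hse.symm with h
    exact h
  intro a ha
  obtain ⟨sa, hsa, hfa⟩ := aut_pair_is_pair hS hK hf hsing hx₀ ha
  have := hsig a sa ha hsa hfa
  rw [hfa, this, hs₁1, one_mul]

lemma singleton_add_pair (t a d : ℕ) :
    ({t} : Finset ℕ) + {a, a + d} = {t + a, (t + a) + d} := by
  ext v
  rw [singleton_add']
  simp only [Finset.mem_image, Finset.mem_insert, Finset.mem_singleton]
  constructor
  · rintro ⟨w, hw, rfl⟩
    rcases hw with rfl | rfl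
    · left; rfl
    · right; omega
  · rintro (rfl | rfl)
    · exact ⟨a, Or.inl rfl, rfl⟩
    · exact ⟨a + d, Or.inr rfl, by omega⟩

lemma fix_pair_general (hS : IsNumSgp S) (hK : ∀ n, K ≤ n → n ∈ S) (hf : IsPowerAut S f)
    (hsing : ∀ a ∈ S, f {a} = {a}) {x d : ℕ} (hd : 0 < d)
    (hPS : ({x, x + d} : Finset ℕ) ∈ PS S) : f {x, x + d} = {x, x + d} := by
  have hKS : K ∈ S := hK K le_rfl
  have h1 : ({K} : Finset ℕ) + {x, x + d} = {K + x, (K + x) + d} := singleton_add_pair K x d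
  have h2 : f (({K} : Finset ℕ) + {x, x + d}) = ({K} : Finset ℕ) + f {x, x + d} := by
    rw [aut_add hf (singleton_PS hKS) hPS, hsing K hKS]
  have h3 : f ({K + x, (K + x) + d} : Finset ℕ) = {K + x, (K + x) + d} :=
    aut_fixes_pair hS hK hf hsing (by omega : K ≤ K + x) d hd
  have h4 : ({K} : Finset ℕ) + f {x, x + d} = ({K} : Finset ℕ) + {x, x + d} := by
    rw [← h2, h1]; exact h3
  exact singleton_add_cancel h4

end Main

end StmtAux

/-- An automorphism of `P(S)` fixes every two-element set. -/
theorem stmt6 (S : Set ℕ) (hS : IsNumSgp S) (f : Finset ℕ → Finset ℕ)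
    (hf : IsPowerAut S f) :
    ∀ X : Finset ℕ, (X : Set ℕ) ⊆ S → X.card = 2 → f X = X := by
  classical
  obtain ⟨K, hK⟩ := StmtAux.exists_bound S hS
  have hsing := StmtAux.aut_fixes_singleton hS hK hf
  intro X hXS hcard
  obtain ⟨a, b, hab, rfl⟩ := Finset.card_eq_two.1 hcard
  have hXPS : ({a, b} : Finset ℕ) ∈ PS S := ⟨⟨a, by simp⟩, hXS⟩
  rcases Nat.lt_or_ge a b with hlt | hge
  · set d := b - a with hd
    have e : b = a + d := by omega
    rw [e] at hXPS ⊢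
    exact StmtAux.fix_pair_general hS hK hf hsing (by omega) hXPS
  · have hlt : b < a := by omega
    have e2 : ({a, b} : Finset ℕ) = {b, a} := Finset.pair_comm a b
    rw [e2] at hXPS ⊢
    set d := a - b with hd
    have e : a = b + d := by omega
    rw [e] at hXPS ⊢
    exact StmtAux.fix_pair_general hS hK hf hsing (by omega) hXPS
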